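/- Let n ≥ 1 and let A, B be positive definite Hermitian n×n complex matrices. Then tr(B⁻¹·A) ≤ n·(det A / det B)·(tr(A⁻¹·B))^(n−1), where det A and det B denote the determinants of A and B (which are positive real numbers) and tr denotes the trace. -/

import Mathlib

open Matrix
open scoped ComplexOrder

private lemma scalar_key {n : ℕ} (μ : Fin n → ℝ) (hμ : ∀ i, 0 < μ i) :
    ∑ i, μ i ≤ (n : ℝ) * (∏ i, μ i) * (∑ i, (μ i)⁻¹) ^ (n - 1) := by
  have key : ∀ i ∈ Finset.univ, μ i ≤ (∏ j, μ j) * (∑ j, (μ j)⁻¹) ^ (n - 1) := by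
    intro i _
    have h1 : (∏ j, μ j) * ∏ j ∈ Finset.univ.erase i, (μ j)⁻¹ = μ i := by
      rw [← Finset.mul_prod_erase Finset.univ μ (Finset.mem_univ i), mul_assoc,
        ← Finset.prod_mul_distrib]
      have : ∏ j ∈ Finset.univ.erase i, (μ j * (μ j)⁻¹) = 1 :=
        Finset.prod_eq_one fun j _ => mul_inv_cancel₀ (hμ j).ne'
      rw [this, mul_one]
    calc μ i = (∏ j, μ j) * ∏ j ∈ Finset.univ.erase i, (μ j)⁻¹ := h1.symm
      _ ≤ (∏ j, μ j) * (∑ j, (μ j)⁻¹) ^ (n - 1) := by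
          refine mul_le_mul_of_nonneg_left ?_ (Finset.prod_nonneg fun j _ => (hμ j).le)
          calc ∏ j ∈ Finset.univ.erase i, (μ j)⁻¹
              ≤ ∏ _j ∈ Finset.univ.erase i, (∑ k, (μ k)⁻¹) := by
                refine Finset.prod_le_prod (fun j _ => inv_nonneg.2 (hμ j).le) ?_
                intro j _
                exact Finset.single_le_sum (fun k _ => inv_nonneg.2 (hμ k).le)
                  (Finset.mem_univ j)
            _ = (∑ k, (μ k)⁻¹) ^ (n - 1) := by
                rw [Finset.prod_const, Finset.card_erase_of_mem (Finset.mem_univ i),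
                  Finset.card_univ, Fintype.card_fin]
  calc ∑ i, μ i ≤ ∑ _i : Fin n, (∏ j, μ j) * (∑ j, (μ j)⁻¹) ^ (n - 1) :=
        Finset.sum_le_sum key
    _ = (n : ℝ) * (∏ j, μ j) * (∑ j, (μ j)⁻¹) ^ (n - 1) := by
        rw [Finset.sum_const, Finset.card_univ, Fintype.card_fin, nsmul_eq_mul, mul_assoc]

private lemma matrix_key {n : ℕ} (M : Matrix (Fin n) (Fin n) ℂ) (hM : M.PosDef) :
    (M.trace).re ≤ (n : ℝ) * M.det.re * ((M⁻¹.trace).re) ^ (n - 1) := by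
  have h := hM.isHermitian
  set U : Matrix (Fin n) (Fin n) ℂ := (h.eigenvectorUnitary : Matrix (Fin n) (Fin n) ℂ) with hU
  have h2 : star U * U = 1 := Matrix.mem_unitaryGroup_iff'.mp h.eigenvectorUnitary.2
  have h3 : U * star U = 1 := Matrix.mem_unitaryGroup_iff.mp h.eigenvectorUnitary.2
  have htr : M.trace = ∑ i, (h.eigenvalues i : ℂ) := by
    conv_lhs => rw [h.spectral_theorem, Unitary.conjStarAlgAut_apply]
    rw [Matrix.trace_mul_cycle, h2, Matrix.one_mul, Matrix.trace_diagonal]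
    simp
  have hD : (diagonal (RCLike.ofReal ∘ h.eigenvalues) : Matrix (Fin n) (Fin n) ℂ)⁻¹
      = diagonal (fun i => ((h.eigenvalues i : ℂ))⁻¹) := by
    apply Matrix.inv_eq_left_inv
    rw [diagonal_mul_diagonal]
    have : (fun i => ((h.eigenvalues i : ℂ))⁻¹ * (RCLike.ofReal ∘ h.eigenvalues) i)
        = fun _ => (1 : ℂ) := by
      funext i
      have hne : (h.eigenvalues i : ℂ) ≠ 0 := by
        exact_mod_cast Complex.ofReal_ne_zero.mpr (hM.eigenvalues_pos i).ne'
      simpa [Function.comp] using inv_mul_cancel₀ hne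
    rw [this, diagonal_one]
  have hinv : M⁻¹ = U * diagonal (fun i => ((h.eigenvalues i : ℂ))⁻¹) * star U := by
    conv_lhs => rw [h.spectral_theorem, Unitary.conjStarAlgAut_apply]
    rw [Matrix.mul_inv_rev, Matrix.mul_inv_rev]
    rw [Matrix.inv_eq_left_inv h3, Matrix.inv_eq_left_inv h2, hD]
    rw [← Matrix.mul_assoc]
  have htr' : M⁻¹.trace = ∑ i, ((h.eigenvalues i : ℂ))⁻¹ := by
    rw [hinv, Matrix.trace_mul_cycle, h2, Matrix.one_mul, Matrix.trace_diagonal]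
  have hdet : M.det = ∏ i, (h.eigenvalues i : ℂ) := h.det_eq_prod_eigenvalues
  have e1 : (M.trace).re = ∑ i, h.eigenvalues i := by
    rw [htr, ← Complex.ofReal_sum, Complex.ofReal_re]
  have e2 : (M⁻¹.trace).re = ∑ i, (h.eigenvalues i)⁻¹ := by
    rw [htr']
    simp [← Complex.ofReal_inv, ← Complex.ofReal_sum]
  have e3 : M.det.re = ∏ i, h.eigenvalues i := by
    rw [hdet]
    norm_cast
  rw [e1, e2, e3]
  exact scalar_key h.eigenvalues hM.eigenvalues_pos

open scoped MatrixOrder in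
private lemma exists_sqrt_aux {n : ℕ} (B : Matrix (Fin n) (Fin n) ℂ) (hB : B.PosDef) :
    ∃ S : Matrix (Fin n) (Fin n) ℂ, S.PosSemidef ∧ S * S = B :=
  ⟨CFC.sqrt B, (CFC.sqrt_nonneg B).posSemidef, by
    rw [← sq]; exact CFC.sq_sqrt B hB.posSemidef.nonneg⟩

/-- For positive definite Hermitian matrices `A`, `B`,
`tr (B⁻¹ * A) ≤ n * (det A / det B) * (tr (A⁻¹ * B))^(n-1)`. -/
theorem trace_inv_mul_le_n_mul_det_div_det_mul_trace_pow
    (n : ℕ) (hn : 1 ≤ n) (A B : Matrix (Fin n) (Fin n) ℂ)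
    (hA : A.PosDef) (hB : B.PosDef) :
    ((B⁻¹ * A).trace).re ≤
      (n : ℝ) * (A.det.re / B.det.re) * (((A⁻¹ * B).trace).re) ^ (n - 1) := by
  obtain ⟨S, hS, hSS⟩ := exists_sqrt_aux B hB
  have hSH : S.IsHermitian := hS.1
  have hdetS : S.det * S.det = B.det := by rw [← det_mul, hSS]
  have hdetB : B.det ≠ 0 := hB.det_pos.ne'
  have hdS : S.det ≠ 0 := fun h => hdetB (by rw [← hdetS, h, zero_mul])
  have hSunit : IsUnit S := (Matrix.isUnit_iff_isUnit_det S).2 hdS.isUnit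
  have hSinv : S⁻¹.IsHermitian := hSH.inv
  set M := S⁻¹ * A * S⁻¹ with hMdef
  have hM : M.PosDef := by
    refine Matrix.PosDef.of_dotProduct_mulVec_pos ?_ ?_
    · show Mᴴ = M
      rw [hMdef]
      simp [conjTranspose_mul, hSinv.eq, hA.1.eq, Matrix.mul_assoc]
    · intro x hx
      have h4 : IsUnit S⁻¹ := Matrix.isUnit_nonsing_inv_iff.2 hSunit
      have hy : S⁻¹ *ᵥ x ≠ 0 := by
        intro hy
        exact hx ((Matrix.mulVec_injective_iff_isUnit.mpr h4) (by simpa using hy))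
      have key : star x ⬝ᵥ (M *ᵥ x) = star (S⁻¹ *ᵥ x) ⬝ᵥ (A *ᵥ (S⁻¹ *ᵥ x)) := by
        have hstep : M *ᵥ x = S⁻¹ *ᵥ (A *ᵥ (S⁻¹ *ᵥ x)) := by
          simp [hMdef, mulVec_mulVec, Matrix.mul_assoc]
        rw [hstep, dotProduct_mulVec,
          show star x ᵥ* S⁻¹ = star (S⁻¹ *ᵥ x) from by rw [star_mulVec, hSinv.eq]]
      rw [key]
      exact hA.dotProduct_mulVec_pos hy
  have hBinv : B⁻¹ = S⁻¹ * S⁻¹ := by rw [← hSS, Matrix.mul_inv_rev]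
  have e1 : (B⁻¹ * A).trace = M.trace := by
    rw [hBinv]
    exact (Matrix.trace_mul_cycle S⁻¹ A S⁻¹).symm
  have hSinvS : S⁻¹⁻¹ = S := Matrix.nonsing_inv_nonsing_inv S hdS.isUnit
  have e3 : M⁻¹ = S * A⁻¹ * S := by
    rw [hMdef, Matrix.mul_inv_rev, Matrix.mul_inv_rev, hSinvS, Matrix.mul_assoc]
  have e4 : (A⁻¹ * B).trace = M⁻¹.trace := by
    rw [e3, ← hSS, Matrix.trace_mul_cycle S A⁻¹ S]
    exact Matrix.trace_mul_comm _ _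
  have e2 : M.det = A.det * B.det⁻¹ := by
    rw [hMdef, det_mul, det_mul, Matrix.det_nonsing_inv, Ring.inverse_eq_inv', ← hdetS]
    field_simp
  have hdA' : A.det = (A.det.re : ℂ) := by
    apply Complex.ext
    · rfl
    · simpa using ((Complex.lt_def.mp hA.det_pos).2).symm
  have hdB' : B.det = (B.det.re : ℂ) := by
    apply Complex.ext
    · rfl
    · simpa using ((Complex.lt_def.mp hB.det_pos).2).symm
  have hdet_re : M.det.re = A.det.re / B.det.re := by
    have hC : M.det = ((A.det.re / B.det.re : ℝ) : ℂ) := by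
      rw [e2]
      conv_lhs => rw [hdA', hdB']
      push_cast
      ring
    rw [hC, Complex.ofReal_re]
  calc ((B⁻¹ * A).trace).re = M.trace.re := by rw [e1]
    _ ≤ (n : ℝ) * M.det.re * ((M⁻¹.trace).re) ^ (n - 1) := matrix_key M hM
    _ = (n : ℝ) * (A.det.re / B.det.re) * (((A⁻¹ * B).trace).re) ^ (n - 1) := by
        rw [hdet_re, e4]
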